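/- Let I ⊆ ℝ be an open interval, a, c, f₄ : ℝ → ℝ with c(x) ≠ 0 and f₄(x) ≠ 0 on I, suppose q(x) = f₄(x)/c(x) is differentiable on I, and define b(x) = (1/f₄(x))·[ c(x)·q'(x) − f₄(x)²/2 − 2a(x)c(x) ]. Let B be differentiable on I with B'(x) = b(x) + f₄(x), and G differentiable on I with G'(x) = c(x)·exp(B(x)). Then y_p(x) = f₄(x)/(2c(x)) solves the Riccati equation on I, and for every constant C₁₁ ∈ ℝ the function y(x) = f₄(x)/(2c(x)) + exp(B(x))/(C₁₁ − G(x)) satisfies y'(x) = a(x) + b(x)y(x) + c(x)y(x)² at every x ∈ I with C₁₁ − G(x) ≠ 0. -/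

import Mathlib

/-- Theorem 8 (Case 8): with `f₄ ≠ 0`, `f₄/c` differentiable with derivative
`q'`, `b = (1/f₄)[c·q' − f₄²/2 − 2ac]`, `B' = b + f₄` and `G' = c · exp B`,
the function `y_p = f₄/(2c)` solves the Riccati equation, and
`y = f₄/(2c) + exp B / (C₁₁ − G)` solves it wherever `C₁₁ − G ≠ 0`. -/
theorem riccati_case8
    (p q : ℝ) (a b c f₄ q' B G : ℝ → ℝ)
    (hc : ∀ x ∈ Set.Ioo p q, c x ≠ 0)
    (hf : ∀ x ∈ Set.Ioo p q, f₄ x ≠ 0)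
    (hq : ∀ x ∈ Set.Ioo p q, HasDerivAt (fun t => f₄ t / c t) (q' x) x)
    (hb : ∀ x ∈ Set.Ioo p q,
      b x = (1 / f₄ x) * (c x * q' x - f₄ x ^ 2 / 2 - 2 * a x * c x))
    (hB : ∀ x ∈ Set.Ioo p q, HasDerivAt B (b x + f₄ x) x)
    (hG : ∀ x ∈ Set.Ioo p q, HasDerivAt G (c x * Real.exp (B x)) x)
    (C₁₁ : ℝ) :
    (∀ x ∈ Set.Ioo p q,
      HasDerivAt (fun t => f₄ t / (2 * c t))
        (a x + b x * (f₄ x / (2 * c x)) + c x * (f₄ x / (2 * c x)) ^ 2) x) ∧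
    (∀ x ∈ Set.Ioo p q, C₁₁ - G x ≠ 0 →
      HasDerivAt (fun t => f₄ t / (2 * c t) + Real.exp (B t) / (C₁₁ - G t))
        (a x + b x * (f₄ x / (2 * c x) + Real.exp (B x) / (C₁₁ - G x))
          + c x * (f₄ x / (2 * c x) + Real.exp (B x) / (C₁₁ - G x)) ^ 2) x) := by

  have key : ∀ x ∈ Set.Ioo p q,
      HasDerivAt (fun t => f₄ t / (2 * c t)) (q' x / 2) x := by
    intro x hx
    have heq : (fun t => f₄ t / (2 * c t)) = (fun t => (f₄ t / c t) / 2) := by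
      funext t; rw [div_div, mul_comm]
    rw [heq]
    exact (hq x hx).div_const 2
  constructor
  · intro x hx
    have h1 := key x hx
    convert h1 using 1
    have hcx := hc x hx
    have hfx := hf x hx
    rw [hb x hx]
    field_simp
    ring
  · intro x hx hne
    have h1 := key x hx
    have hdiv := ((hB x hx).exp).div ((hasDerivAt_const x C₁₁).sub (hG x hx)) hne
    have h2 := h1.add hdiv
    refine h2.congr_deriv ?_
    simp only [Pi.sub_apply]
    have hcx := hc x hx
    have hfx := hf x hx
    rw [hb x hx]
    have he := Real.exp_ne_zero (B x)
    field_simp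
    ring
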